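/- Let ξ be a random variable taking values in [0,∞) with E[ξ]=1 and finite third moment. Then for all p, θ ∈ (0,1/2), ((1-θ)/θ)·log E[(1 + p(ξ-1))^{θ/(1-θ)}] ≤ −(p^2/2)·Var(ξ) + C·(p^3 + θ·p^2), where C is a constant depending only on the law of ξ (one may take C = 4E[|ξ-1|^3] + Var(ξ)). -/

import Mathlib

open MeasureTheory

open Real


-- Bernoulli for exponent in (-1,0): (1+x)^(α-1) ≥ 1 + (α-1)x
lemma bern_neg {α x : ℝ} (hx : -1 < x) (hα0 : 0 < α) (hα1 : α < 1) :
    1 + (α - 1) * x ≤ (1 + x) ^ (α - 1) := by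
  have h1x : (0:ℝ) < 1 + x := by linarith
  rcases le_or_gt (1 + (α - 1) * x) 0 with h | h
  · exact h.trans (rpow_pos_of_pos h1x _).le
  · have hq : (1 + x) ^ (1 - α) ≤ 1 + (1 - α) * x :=
      rpow_one_add_le_one_add_mul_self (by linarith) (by linarith) (by linarith)
    have hpos : (0:ℝ) < (1 + x) ^ (1 - α) := rpow_pos_of_pos h1x _
    have hkey : (1 + (α - 1) * x) * (1 + x) ^ (1 - α) ≤ 1 := by
      calc (1 + (α - 1) * x) * (1 + x) ^ (1 - α)
          ≤ (1 + (α - 1) * x) * (1 + (1 - α) * x) :=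
            mul_le_mul_of_nonneg_left hq h.le
        _ = 1 - ((1 - α) * x) ^ 2 := by ring
        _ ≤ 1 := by nlinarith [sq_nonneg ((1 - α) * x)]
    have : (1 + x) ^ (α - 1) = ((1 + x) ^ (1 - α))⁻¹ := by
      rw [← rpow_neg h1x.le]; ring_nf
    rw [this, ← one_div, le_div_iff₀ hpos]
    exact hkey

-- upper bound for exponent in (-1,0) on x ≥ 0
lemma upper1 {α x : ℝ} (hx : 0 ≤ x) (hα0 : 0 < α) (hα1 : α < 1) :
    (1 + x) ^ (α - 1) ≤ 1 + (α - 1) * x + x ^ 2 := by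
  have h1x : (0:ℝ) < 1 + x := by linarith
  have hz : (1 + x)⁻¹ - 1 ≥ -1 := by
    have : (0:ℝ) < (1 + x)⁻¹ := by positivity
    linarith
  have h1 : (1 + ((1 + x)⁻¹ - 1)) ^ (1 - α) ≤ 1 + (1 - α) * ((1 + x)⁻¹ - 1) :=
    rpow_one_add_le_one_add_mul_self hz (by linarith) (by linarith)
  have h2 : (1 + ((1 + x)⁻¹ - 1)) ^ (1 - α) = (1 + x) ^ (α - 1) := by
    rw [show 1 + ((1 + x)⁻¹ - 1) = (1 + x)⁻¹ by ring, inv_rpow h1x.le,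
      ← rpow_neg h1x.le]
    norm_num
  rw [h2] at h1
  refine h1.trans ?_
  have ht : x / (1 + x) * (1 + x) = x := div_mul_cancel₀ x h1x.ne'
  have ht0 : 0 ≤ x / (1 + x) := div_nonneg hx h1x.le
  have hinv : (1 + x)⁻¹ - 1 = -(x / (1 + x)) := by field_simp; ring
  rw [hinv]
  nlinarith [ht, ht0, mul_nonneg ht0 hx, sq_nonneg x]

lemma hasDerivAt_one_add_rpow (c : ℝ) {y : ℝ} (hy : -1 < y) :
    HasDerivAt (fun x : ℝ => (1 + x) ^ c) (c * (1 + y) ^ (c - 1)) y := by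
  have h1 : HasDerivAt (fun x : ℝ => 1 + x) 1 y := (hasDerivAt_id y).const_add 1
  have h2 := (Real.hasDerivAt_rpow_const (x := 1 + y) (p := c)
    (Or.inl (by linarith))).comp y h1
  rw [mul_one] at h2
  exact h2

lemma key_right {α x : ℝ} (hα0 : 0 < α) (hα1 : α < 1) (hx : 0 ≤ x) :
    (1 + x) ^ α ≤ 1 + α * x + α * (α - 1) / 2 * x ^ 2 + 4 * α * x ^ 3 := by
  set h : ℝ → ℝ := fun x => 1 + α * x + α * (α - 1) / 2 * x ^ 2 + 4 * α * x ^ 3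
    - (1 + x) ^ α with hh
  have hder : ∀ y : ℝ, -1 < y → HasDerivAt h
      (α + α * (α - 1) * y + 12 * α * y ^ 2 - α * (1 + y) ^ (α - 1)) y := by
    intro y hy
    have h1 := hasDerivAt_one_add_rpow α hy
    have h2 : HasDerivAt (fun x : ℝ => 1 + α * x + α * (α - 1) / 2 * x ^ 2
        + 4 * α * x ^ 3) (α + α * (α - 1) * y + 12 * α * y ^ 2) y := by
      have ha : HasDerivAt (fun x : ℝ => x) 1 y := hasDerivAt_id y
      have hb := hasDerivAt_pow 2 y
      have hc := hasDerivAt_pow 3 y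
      have := (((ha.const_mul α).const_add 1).add (hb.const_mul (α * (α - 1) / 2))).add
        (hc.const_mul (4 * α))
      refine this.congr_deriv ?_
      push_cast
      ring
    exact h2.sub h1
  have hmono : MonotoneOn h (Set.Ici (0:ℝ)) := by
    apply monotoneOn_of_deriv_nonneg (convex_Ici 0)
    · intro y hy
      exact (hder y (by simp at hy; linarith)).continuousAt.continuousWithinAt
    · intro y hy
      rw [interior_Ici] at hy
      exact (hder y (by simp at hy; linarith)).differentiableAt.differentiableWithinAt
    · intro y hy
      rw [interior_Ici] at hy
      have hy0 : (0:ℝ) < y := hy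
      rw [(hder y (by linarith)).deriv]
      have := upper1 (α := α) hy0.le hα0 hα1
      nlinarith [sq_nonneg y, mul_pos hy0 hy0]
  have h0 : h 0 = 0 := by simp [hh]
  have := hmono (Set.self_mem_Ici) (Set.mem_Ici.mpr hx) hx
  rw [h0] at this
  simp only [hh] at this
  linarith

lemma key_left {α x : ℝ} (hα0 : 0 < α) (hα1 : α < 1) (hx : -1/2 ≤ x) (hx0 : x ≤ 0) :
    (1 + x) ^ α ≤ 1 + α * x + α * (α - 1) / 2 * x ^ 2 - 4 * α * x ^ 3 := by
  set h : ℝ → ℝ := fun x => 1 + α * x + α * (α - 1) / 2 * x ^ 2 - 4 * α * x ^ 3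
    - (1 + x) ^ α with hh
  have hder : ∀ y : ℝ, -1 < y → HasDerivAt h
      (α + α * (α - 1) * y - 12 * α * y ^ 2 - α * (1 + y) ^ (α - 1)) y := by
    intro y hy
    have h1 := hasDerivAt_one_add_rpow α hy
    have h2 : HasDerivAt (fun x : ℝ => 1 + α * x + α * (α - 1) / 2 * x ^ 2
        - 4 * α * x ^ 3) (α + α * (α - 1) * y - 12 * α * y ^ 2) y := by
      have ha : HasDerivAt (fun x : ℝ => x) 1 y := hasDerivAt_id y
      have hb := hasDerivAt_pow 2 y
      have hc := hasDerivAt_pow 3 y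
      have := (((ha.const_mul α).const_add 1).add (hb.const_mul (α * (α - 1) / 2))).sub
        (hc.const_mul (4 * α))
      refine this.congr_deriv ?_
      push_cast
      ring
    exact h2.sub h1
  have hanti : AntitoneOn h (Set.Icc (-1/2 : ℝ) 0) := by
    apply antitoneOn_of_deriv_nonpos (convex_Icc _ _)
    · intro y hy
      exact (hder y (by simp at hy; linarith [hy.1])).continuousAt.continuousWithinAt
    · intro y hy
      rw [interior_Icc] at hy
      exact (hder y (by linarith [hy.1])).differentiableAt.differentiableWithinAt
    · intro y hy
      rw [interior_Icc] at hy
      rw [(hder y (by linarith [hy.1])).deriv]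
      have := bern_neg (α := α) (x := y) (by linarith [hy.1]) hα0 hα1
      nlinarith [sq_nonneg y]
  have h0 : h 0 = 0 := by simp [hh]
  have := hanti (Set.mem_Icc.mpr ⟨hx, hx0⟩) (Set.mem_Icc.mpr ⟨by norm_num, le_refl 0⟩) hx0
  rw [h0] at this
  simp only [hh] at this
  linarith

lemma key_pointwise {α x : ℝ} (hα0 : 0 < α) (hα1 : α < 1) (hx : -1/2 ≤ x) :
    (1 + x) ^ α ≤ 1 + α * x + α * (α - 1) / 2 * x ^ 2 + 4 * α * |x| ^ 3 := by
  rcases le_or_gt 0 x with h | h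
  · rw [abs_of_nonneg h]; exact key_right hα0 hα1 h
  · rw [abs_of_neg h]
    have := key_left hα0 hα1 hx h.le
    calc (1 + x) ^ α ≤ 1 + α * x + α * (α - 1) / 2 * x ^ 2 - 4 * α * x ^ 3 := this
      _ = 1 + α * x + α * (α - 1) / 2 * x ^ 2 + 4 * α * (-x) ^ 3 := by ring

theorem log_integral_fractional_power_le
    {Ω : Type*} [MeasurableSpace Ω] (μ : Measure Ω) [IsProbabilityMeasure μ]
    (ξ : Ω → ℝ) (hmeas : Measurable ξ)
    (hpos : ∀ᵐ ω ∂μ, 0 ≤ ξ ω)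
    (hint : Integrable ξ μ) (hmean : ∫ ω, ξ ω ∂μ = 1)
    (h2 : Integrable (fun ω => (ξ ω - 1)^2) μ)
    (h3 : Integrable (fun ω => |ξ ω - 1|^3) μ)
    (p θ : ℝ) (hp0 : 0 < p) (hp1 : p < 1/2) (hθ0 : 0 < θ) (hθ1 : θ < 1/2) :
    ((1 - θ) / θ) * Real.log (∫ ω, (1 + p * (ξ ω - 1)) ^ (θ / (1 - θ)) ∂μ) ≤
      -(p^2 / 2) * (∫ ω, (ξ ω - 1)^2 ∂μ) +
        (4 * (∫ ω, |ξ ω - 1|^3 ∂μ) + (∫ ω, (ξ ω - 1)^2 ∂μ)) * (p^3 + θ * p^2) := by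
  set α := θ / (1 - θ) with hαdef
  have hθ2 : (0:ℝ) < 1 - θ := by linarith
  have hα0 : 0 < α := div_pos hθ0 hθ2
  have hα1 : α < 1 := by rw [hαdef, div_lt_one hθ2]; linarith
  have hα2θ : α ≤ 2 * θ := by
    rw [hαdef, div_le_iff₀ hθ2]; nlinarith
  set f : Ω → ℝ := fun ω => (1 + p * (ξ ω - 1)) ^ α with hf
  have hae : ∀ᵐ ω ∂μ, -1/2 ≤ p * (ξ ω - 1) := by
    filter_upwards [hpos] with ω h
    nlinarith [mul_nonneg hp0.le h]
  have hsub : Integrable (fun ω => ξ ω - 1) μ := hint.sub (integrable_const 1)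
  have hm : AEStronglyMeasurable f μ := by
    have : Measurable fun ω => 1 + p * (ξ ω - 1) :=
      ((hmeas.sub_const 1).const_mul p).const_add 1
    exact ((Real.continuous_rpow_const hα0.le).measurable.comp this).aestronglyMeasurable
  -- integrability of f
  have hconc : ∀ᵐ ω ∂μ, f ω ≤ 1 + α * (p * (ξ ω - 1)) := by
    filter_upwards [hae] with ω h
    exact rpow_one_add_le_one_add_mul_self (by linarith) hα0.le hα1.le
  have hfnn : ∀ᵐ ω ∂μ, 0 ≤ f ω := by
    filter_upwards [hae] with ω h
    exact rpow_nonneg (by linarith) _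
  have hbint : Integrable (fun ω => 1 + α * (p * (ξ ω - 1))) μ := by
    simpa using (integrable_const (1:ℝ)).add ((hsub.const_mul p).const_mul α)
  have hintf : Integrable f μ := by
    refine hbint.mono' hm ?_
    filter_upwards [hconc, hfnn] with ω h1 h0
    rw [Real.norm_eq_abs, abs_of_nonneg h0]
    exact h1
  -- the upper bound function G
  set G : Ω → ℝ := fun ω => 1 + (α * p) * (ξ ω - 1)
      + (α * (α - 1) / 2 * p ^ 2) * ((ξ ω - 1) ^ 2)
      + (4 * α * p ^ 3) * (|ξ ω - 1| ^ 3) with hG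
  have hGint : Integrable G μ := by
    apply Integrable.add
    apply Integrable.add
    · simpa using (integrable_const (1:ℝ)).add (hsub.const_mul (α * p))
    · exact h2.const_mul _
    · exact h3.const_mul _
  have hfG : ∀ᵐ ω ∂μ, f ω ≤ G ω := by
    filter_upwards [hae] with ω h
    have hk := key_pointwise hα0 hα1 h
    have he : 1 + α * (p * (ξ ω - 1)) + α * (α - 1) / 2 * (p * (ξ ω - 1)) ^ 2
        + 4 * α * |p * (ξ ω - 1)| ^ 3 = G ω := by
      rw [abs_mul, abs_of_pos hp0, hG]; ring
    rw [hf]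
    rw [he] at hk
    exact hk
  have hIG : ∫ ω, G ω ∂μ = 1 + (α * (α - 1) / 2 * p ^ 2) * (∫ ω, (ξ ω - 1)^2 ∂μ)
      + (4 * α * p ^ 3) * (∫ ω, |ξ ω - 1|^3 ∂μ) := by
    rw [hG]
    rw [integral_add (by
        apply Integrable.add
        · simpa using (integrable_const (1:ℝ)).add (hsub.const_mul (α * p))
        · exact h2.const_mul _) (h3.const_mul _)]
    rw [integral_add (by
        simpa using (integrable_const (1:ℝ)).add (hsub.const_mul (α * p)))
      (h2.const_mul _)]
    rw [integral_add (integrable_const 1) (hsub.const_mul (α * p))]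
    rw [integral_const_mul, integral_const_mul, integral_const_mul]
    have hz : ∫ ω, (ξ ω - 1) ∂μ = 0 := by
      rw [integral_sub hint (integrable_const 1), hmean]
      simp
    rw [hz]
    simp
  have hI1 : ∫ ω, f ω ∂μ ≤ ∫ ω, G ω ∂μ := integral_mono_ae hintf hGint hfG
  -- positivity of the integral
  have hflb : ∀ᵐ ω ∂μ, ((1:ℝ)/2) ^ α ≤ f ω := by
    filter_upwards [hae] with ω h
    exact rpow_le_rpow (by norm_num) (by linarith) hα0.le
  have hIpos : 0 < ∫ ω, f ω ∂μ := by
    have h0 : (0:ℝ) < ((1:ℝ)/2) ^ α := rpow_pos_of_pos (by norm_num) _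
    have := integral_mono_ae (integrable_const (((1:ℝ)/2) ^ α)) hintf hflb
    simp only [integral_const, measure_univ, ENNReal.toReal_one, probReal_univ, one_smul] at this
    linarith
  have hlog : Real.log (∫ ω, f ω ∂μ) ≤ (α * (α - 1) / 2 * p ^ 2) * (∫ ω, (ξ ω - 1)^2 ∂μ)
      + (4 * α * p ^ 3) * (∫ ω, |ξ ω - 1|^3 ∂μ) := by
    have := Real.log_le_sub_one_of_pos hIpos
    rw [hIG] at hI1
    linarith
  set V := ∫ ω, (ξ ω - 1)^2 ∂μ with hVdef
  set M := ∫ ω, |ξ ω - 1|^3 ∂μ with hMdef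
  have hV : 0 ≤ V := integral_nonneg fun ω => sq_nonneg _
  have hM : 0 ≤ M := integral_nonneg fun ω => pow_nonneg (abs_nonneg _) 3
  have hit : (1 - θ) / θ = α⁻¹ := by rw [hαdef, inv_div]
  rw [hit]
  have hstep : α⁻¹ * Real.log (∫ ω, f ω ∂μ) ≤ (α - 1) / 2 * p ^ 2 * V + 4 * p ^ 3 * M := by
    have h := mul_le_mul_of_nonneg_left hlog (inv_nonneg.mpr hα0.le)
    refine h.trans_eq ?_
    field_simp
  refine hstep.trans ?_
  nlinarith [mul_nonneg hV (pow_nonneg hp0.le 3),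
    mul_nonneg (mul_nonneg hM hθ0.le) (sq_nonneg p),
    mul_nonneg (mul_nonneg hV (sub_nonneg.mpr hα2θ)) (sq_nonneg p)]
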